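/- Let Γ be a connected graph with N vertices and k edges, and let C_Γ = C^{⊗k}/I_disc, where each tensor factor of C = (ℚ[1] → ℚ) colors an edge of Γ (degree −1 basis element = solid, degree 0 = dashed) and I_disc is the subcomplex spanned by colorings whose solid subgraph (all vertices, only solid edges) is disconnected. Then the cohomology of C_Γ is concentrated in its top degree 1 − N. -/

import Mathlib

/-- The `k`-th tensor power `C^{⊗k}` of the two-term acyclic complex `C = (ℚ[1] → ℚ)`,
with basis `δ_S` for `S ⊆ {1,…,k}` the set of "solid" edges, in degree `-|S|`. -/
abbrev TPowC (k : ℕ) : Type := Finset (Fin k) → ℚ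

/-- The differential of `C^{⊗k}` (replace one solid edge by a dashed one, with Koszul
signs). -/
noncomputable def dTPow (k : ℕ) : TPowC k →ₗ[ℚ] TPowC k :=
  LinearMap.pi fun T : Finset (Fin k) =>
    ∑ e ∈ Tᶜ, ((-1 : ℚ) ^ (T.filter (fun x => x < e)).card) •
      (LinearMap.proj (insert e T) : TPowC k →ₗ[ℚ] ℚ)

/-- For a graph with `N` vertices whose edges are given by `E : Fin k → Fin N × Fin N`,
`SolidConn E S` says that the "solid subgraph" with all `N` vertices and only the edges
in `S` is connected. -/
def SolidConn {k N : ℕ} (E : Fin k → Fin N × Fin N) (S : Finset (Fin k)) : Prop :=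
  ∀ v w : Fin N,
    Relation.ReflTransGen (fun a b => ∃ t ∈ S, E t = (a, b) ∨ E t = (b, a)) v w

/-- The subcomplex `I_disc ⊆ C^{⊗k}` spanned by the edge-colorings of the graph whose
solid subgraph is disconnected. -/
noncomputable def Idisc {k N : ℕ} (E : Fin k → Fin N × Fin N) : Submodule ℚ (TPowC k) :=
  Submodule.span ℚ
    {f : TPowC k | ∃ S : Finset (Fin k), ¬ SolidConn E S ∧ f = Pi.single S (1 : ℚ)}

lemma dTPow_apply {k : ℕ} (f : TPowC k) (T : Finset (Fin k)) :
    dTPow k f T = ∑ e ∈ Tᶜ, ((-1 : ℚ) ^ (T.filter (fun x => x < e)).card) * f (insert e T) := by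
  simp [dTPow, LinearMap.pi_apply, LinearMap.sum_apply, LinearMap.smul_apply]

-- sign auxiliary
lemma filter_card_insert {k : ℕ} (T : Finset (Fin k)) (e e' : Fin k) (he : e ∉ T) (hne : e ≠ e') :
    ((insert e T).filter (fun x => x < e')).card
      = (T.filter (fun x => x < e')).card + (if e < e' then 1 else 0) := by
  rw [Finset.filter_insert]
  split <;> rename_i h
  · simp [Finset.card_insert_of_notMem (by simp [Finset.mem_filter, he] : e ∉ T.filter (fun x => x < e')), h]
  · simp [h]

lemma sum_antisymm {α : Type*} [DecidableEq α] (s : Finset α) (F : α → α → ℚ)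
    (h : ∀ e ∈ s, ∀ e' ∈ s, e ≠ e' → F e e' = - F e' e) :
    ∑ e ∈ s, ∑ e' ∈ s.erase e, F e e' = 0 := by
  have h2 : ∑ e ∈ s, ∑ e' ∈ s.erase e, F e e' = ∑ e' ∈ s, ∑ e ∈ s.erase e', F e e' := by
    apply Finset.sum_comm'
    intro x y
    simp only [Finset.mem_erase]
    tauto
  have h3 : ∑ e' ∈ s, ∑ e ∈ s.erase e', F e e' = - ∑ e ∈ s, ∑ e' ∈ s.erase e, F e e' := by
    rw [← Finset.sum_neg_distrib]
    apply Finset.sum_congr rfl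
    intro e' he'
    rw [← Finset.sum_neg_distrib]
    apply Finset.sum_congr rfl
    intro e he
    exact h e (Finset.mem_of_mem_erase he) e' he' (Finset.ne_of_mem_erase he)
  linarith [h2, h3]

lemma dTPow_dTPow {k : ℕ} (f : TPowC k) (T : Finset (Fin k)) :
    dTPow k (dTPow k f) T = 0 := by
  rw [dTPow_apply]
  have : ∀ e ∈ Tᶜ, ((-1 : ℚ) ^ (T.filter (fun x => x < e)).card) * dTPow k f (insert e T)
      = ∑ e' ∈ Tᶜ.erase e, ((-1 : ℚ) ^ (T.filter (fun x => x < e)).card)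
          * (((-1 : ℚ) ^ ((insert e T).filter (fun x => x < e')).card)
            * f (insert e' (insert e T))) := by
    intro e he
    rw [dTPow_apply]
    have hc : (insert e T)ᶜ = Tᶜ.erase e := by
      ext x
      simp [Finset.mem_erase, Finset.mem_insert, not_or, and_comm]
    rw [hc, Finset.mul_sum]
  rw [Finset.sum_congr rfl this]
  apply sum_antisymm
  intro e he e' he' hne
  have heT : e ∉ T := by simpa using he
  have he'T : e' ∉ T := by simpa using he'
  rw [filter_card_insert T e e' heT hne, filter_card_insert T e' e he'T hne.symm]
  have hcomm : insert e' (insert e T) = insert e (insert e' T) := (Finset.insert_comm e e' T).symm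
  rw [hcomm]
  have : ∀ m n : ℕ, ∀ b1 b2 : Prop, ∀ [Decidable b1] [Decidable b2], (b1 ↔ ¬ b2) →
      ((-1 : ℚ) ^ m) * (((-1 : ℚ) ^ (n + if b1 then 1 else 0)) * f (insert e (insert e' T)))
       = -(((-1 : ℚ) ^ n) * (((-1 : ℚ) ^ (m + if b2 then 1 else 0)) * f (insert e (insert e' T)))) := by
    intro m n b1 b2 _ _ hb
    rcases Classical.em b2 with h2 | h2
    · rw [if_pos h2, if_neg (by tauto)]
      ring
    · rw [if_neg h2, if_pos (by tauto)]
      ring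
  apply this
  constructor
  · intro h hlt; exact absurd (lt_trans h hlt) (lt_irrefl e)
  · intro h; rcases lt_or_gt_of_ne hne with h1 | h1
    · exact h1
    · exact absurd h1 h

section UpDown
variable {k : ℕ}

def upF (S : Finset (Fin k)) : Finset (Fin (k+1)) :=
  S.map ⟨Fin.castSucc, Fin.castSucc_injective k⟩

noncomputable def downF (T : Finset (Fin (k+1))) : Finset (Fin k) :=
  Finset.univ.filter (fun e => e.castSucc ∈ T)

@[simp] lemma mem_downF {T : Finset (Fin (k+1))} {e : Fin k} :
    e ∈ downF T ↔ e.castSucc ∈ T := by simp [downF]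

@[simp] lemma castSucc_mem_upF {S : Finset (Fin k)} {e : Fin k} :
    e.castSucc ∈ upF S ↔ e ∈ S := by
  simp only [upF, Finset.mem_map, Function.Embedding.coeFn_mk]
  constructor
  · rintro ⟨y, hy, h⟩; rwa [← Fin.castSucc_injective k h]
  · exact fun h => ⟨e, h, rfl⟩

@[simp] lemma last_not_mem_upF {S : Finset (Fin k)} : Fin.last k ∉ upF S := by
  simp only [upF, Finset.mem_map, Function.Embedding.coeFn_mk]
  rintro ⟨y, _, h⟩
  exact absurd h (Fin.ne_last_of_lt (Fin.castSucc_lt_last y))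

lemma upF_downF (T : Finset (Fin (k+1))) : upF (downF T) = T.erase (Fin.last k) := by
  ext x
  rcases eq_or_ne x (Fin.last k) with rfl | hx
  · simp
  · obtain ⟨y, rfl⟩ := Fin.exists_castSucc_eq.mpr hx
    simp [Finset.mem_erase, hx]

@[simp] lemma downF_upF (S : Finset (Fin k)) : downF (upF S) = S := by
  ext e; simp

@[simp] lemma downF_insert_last (T : Finset (Fin (k+1))) :
    downF (insert (Fin.last k) T) = downF T := by
  ext e
  simp [Finset.mem_insert, (Fin.ne_last_of_lt (Fin.castSucc_lt_last e))]

@[simp] lemma downF_insert_castSucc (T : Finset (Fin (k+1))) (e : Fin k) :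
    downF (insert e.castSucc T) = insert e (downF T) := by
  ext x
  simp [Finset.mem_insert, Fin.castSucc_injective k |>.eq_iff]

@[simp] lemma card_upF (S : Finset (Fin k)) : (upF S).card = S.card := Finset.card_map _

lemma upF_downF_of_not_mem {T : Finset (Fin (k+1))} (h : Fin.last k ∉ T) :
    upF (downF T) = T := by
  rw [upF_downF, Finset.erase_eq_of_notMem h]

lemma insert_upF_downF {T : Finset (Fin (k+1))} (h : Fin.last k ∈ T) :
    insert (Fin.last k) (upF (downF T)) = T := by
  rw [upF_downF, Finset.insert_erase h]

lemma card_downF {T : Finset (Fin (k+1))} (h : Fin.last k ∈ T) :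
    (downF T).card + 1 = T.card := by
  rw [← card_upF, upF_downF, Finset.card_erase_of_mem h]
  have := Finset.card_pos.mpr ⟨_, h⟩
  omega

lemma card_downF_of_not_mem {T : Finset (Fin (k+1))} (h : Fin.last k ∉ T) :
    (downF T).card = T.card := by
  rw [← card_upF, upF_downF_of_not_mem h]

lemma compl_of_last_mem {T : Finset (Fin (k+1))} (h : Fin.last k ∈ T) :
    Tᶜ = upF ((downF T)ᶜ) := by
  ext x
  rcases eq_or_ne x (Fin.last k) with rfl | hx
  · simp [h]
  · obtain ⟨y, rfl⟩ := Fin.exists_castSucc_eq.mpr hx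
    simp

lemma compl_of_last_not_mem {T : Finset (Fin (k+1))} (h : Fin.last k ∉ T) :
    Tᶜ = insert (Fin.last k) (upF ((downF T)ᶜ)) := by
  ext x
  rcases eq_or_ne x (Fin.last k) with rfl | hx
  · simp [h]
  · obtain ⟨y, rfl⟩ := Fin.exists_castSucc_eq.mpr hx
    simp [Finset.mem_insert, hx]

lemma filter_lt_castSucc (T : Finset (Fin (k+1))) (e : Fin k) :
    (T.filter (fun x => x < e.castSucc)).card
      = ((downF T).filter (fun x => x < e)).card := by
  have : T.filter (fun x => x < e.castSucc) = upF ((downF T).filter (fun x => x < e)) := by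
    ext x
    rcases eq_or_ne x (Fin.last k) with rfl | hx
    · simp only [Finset.mem_filter]
      constructor
      · rintro ⟨-, hlt⟩
        exact absurd (lt_trans hlt (Fin.castSucc_lt_last e)) (lt_irrefl _)
      · intro h; exact absurd h last_not_mem_upF
    · obtain ⟨y, rfl⟩ := Fin.exists_castSucc_eq.mpr hx
      simp [Finset.mem_filter, Fin.castSucc_lt_castSucc_iff]
  rw [this, card_upF]

lemma filter_lt_last {T : Finset (Fin (k+1))} (h : Fin.last k ∉ T) :
    (T.filter (fun x => x < Fin.last k)).card = T.card := by
  congr 1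
  apply Finset.filter_true_of_mem
  intro x hx
  exact Fin.lt_last_iff_ne_last.mpr (fun he => h (he ▸ hx))

lemma sum_upF {M : Type*} [AddCommMonoid M] (A : Finset (Fin k)) (F : Fin (k+1) → M) :
    ∑ e ∈ upF A, F e = ∑ e ∈ A, F e.castSucc := Finset.sum_map _ _ _

end UpDown

section Transfer
variable {k : ℕ}

lemma TL1 {x : TPowC (k+1)} {x' : TPowC k}
    (hx : ∀ Y, Fin.last k ∈ Y → x Y = x' (downF Y))
    {T : Finset (Fin (k+1))} (hT : Fin.last k ∈ T) :
    dTPow (k+1) x T = dTPow k x' (downF T) := by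
  rw [dTPow_apply, dTPow_apply, compl_of_last_mem hT, sum_upF]
  apply Finset.sum_congr rfl
  intro e he
  rw [filter_lt_castSucc, hx _ (Finset.mem_insert_of_mem hT), downF_insert_castSucc]

lemma TL2 {x : TPowC (k+1)} {x' : TPowC k}
    (hx : ∀ Y, Fin.last k ∉ Y → x Y = x' (downF Y))
    {T : Finset (Fin (k+1))} (hT : Fin.last k ∉ T) :
    dTPow (k+1) x T = dTPow k x' (downF T)
      + (-1 : ℚ) ^ T.card * x (insert (Fin.last k) T) := by
  rw [dTPow_apply, dTPow_apply, compl_of_last_not_mem hT,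
    Finset.sum_insert last_not_mem_upF, sum_upF, filter_lt_last hT, add_comm]
  congr 1
  apply Finset.sum_congr rfl
  intro e he
  rw [filter_lt_castSucc, hx _ (by
    simp only [Finset.mem_insert]
    push_neg
    exact ⟨fun h => (Fin.ne_last_of_lt (Fin.castSucc_lt_last e)) h.symm, hT⟩),
    downF_insert_castSucc]
end Transfer

noncomputable def hK {k : ℕ} (x : TPowC (k+1)) : TPowC (k+1) :=
  fun S => if Fin.last k ∈ S then (-1 : ℚ) ^ (downF S).card * x (upF (downF S)) else 0

lemma HI {k : ℕ} (x : TPowC (k+1)) (T : Finset (Fin (k+1))) :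
    dTPow (k+1) (hK x) T + hK (dTPow (k+1) x) T = x T := by
  by_cases hT : Fin.last k ∈ T
  · have h1 : dTPow (k+1) (hK x) T
        = dTPow k (fun S' => (-1 : ℚ) ^ S'.card * x (upF S')) (downF T) := by
      apply TL1 (fun Y hY => ?_) hT
      simp only [hK, if_pos hY]
    have h2 : hK (dTPow (k+1) x) T
        = (-1 : ℚ) ^ (downF T).card * (dTPow (k+1) x) (upF (downF T)) := by
      simp only [hK, if_pos hT]
    have h3 : (dTPow (k+1) x) (upF (downF T))
        = dTPow k (fun S' => x (upF S')) (downF (upF (downF T)))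
          + (-1 : ℚ) ^ (upF (downF T)).card * x (insert (Fin.last k) (upF (downF T))) := by
      apply TL2 (fun Y hY => ?_) last_not_mem_upF
      rw [upF_downF_of_not_mem hY]
    rw [h1, h2, h3, downF_upF, card_upF, insert_upF_downF hT, dTPow_apply, dTPow_apply]
    have hlast : (-1 : ℚ) ^ (downF T).card * ((-1 : ℚ) ^ (downF T).card * x T) = x T := by
      rw [← mul_assoc, ← pow_add, ← two_mul, pow_mul, neg_one_sq, one_pow, one_mul]
    rw [mul_add, hlast, Finset.mul_sum, ← add_assoc, ← Finset.sum_add_distrib]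
    have : ∀ e ∈ (downF T)ᶜ,
        (-1 : ℚ) ^ ((downF T).filter (fun y => y < e)).card
            * ((-1 : ℚ) ^ (insert e (downF T)).card * x (upF (insert e (downF T))))
          + (-1 : ℚ) ^ (downF T).card
            * ((-1 : ℚ) ^ ((downF T).filter (fun y => y < e)).card
                * x (upF (insert e (downF T)))) = 0 := by
      intro e he
      rw [Finset.card_insert_of_notMem (by simpa using he), pow_succ]
      ring
    rw [Finset.sum_congr rfl this, Finset.sum_const_zero, zero_add]
  · have h2 : hK (dTPow (k+1) x) T = 0 := by simp [hK, hT]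
    have h1 : dTPow (k+1) (hK x) T
        = dTPow k (fun _ => (0 : ℚ)) (downF T)
          + (-1 : ℚ) ^ T.card * (hK x) (insert (Fin.last k) T) := by
      apply TL2 (fun Y hY => ?_) hT
      simp [hK, hY]
    have h0 : dTPow k (fun _ => (0 : ℚ)) (downF T) = 0 := by
      have : (fun _ : Finset (Fin k) => (0 : ℚ)) = (0 : TPowC k) := rfl
      rw [this, map_zero]
      rfl
    rw [h1, h2, h0, zero_add, add_zero]
    simp only [hK, Finset.mem_insert, true_or, if_pos, downF_insert_last]
    rw [upF_downF_of_not_mem hT, card_downF_of_not_mem hT, ← mul_assoc, ← pow_add,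
      ← two_mul, pow_mul, neg_one_sq, one_pow, one_mul]

section Conn
variable {k N : ℕ}

def ERel (E : Fin k → Fin N × Fin N) (S : Finset (Fin k)) (x y : Fin N) : Prop :=
  ∃ t ∈ S, E t = (x, y) ∨ E t = (y, x)

def CW (E : Fin k → Fin N × Fin N) (W : Finset (Fin N)) (S : Finset (Fin k)) : Prop :=
  ∀ v ∈ W, ∀ w ∈ W, Relation.ReflTransGen (ERel E S) v w

lemma ERel_symm {E : Fin k → Fin N × Fin N} {S : Finset (Fin k)} :
    ∀ {x y}, ERel E S x y → ERel E S y x := by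
  rintro x y ⟨t, ht, h | h⟩
  · exact ⟨t, ht, Or.inr h⟩
  · exact ⟨t, ht, Or.inl h⟩

lemma rtg_lift {α : Type*} {r r' : α → α → Prop}
    (h : ∀ a b, r a b → Relation.ReflTransGen r' a b) {a b : α} :
    Relation.ReflTransGen r a b → Relation.ReflTransGen r' a b := by
  intro hab
  induction hab with
  | refl => exact Relation.ReflTransGen.refl
  | tail _ h2 ih => exact ih.trans (h _ _ h2)

lemma rtg_symm {α : Type*} {r : α → α → Prop} (hr : ∀ {x y}, r x y → r y x) {a b : α} :
    Relation.ReflTransGen r a b → Relation.ReflTransGen r b a := by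
  intro hab
  induction hab with
  | refl => exact Relation.ReflTransGen.refl
  | tail _ h2 ih => exact Relation.ReflTransGen.head (hr h2) ih

lemma rtg_map {α β : Type*} {r : α → α → Prop} {r' : β → β → Prop} {f : α → β}
    (h : ∀ a b, r a b → Relation.ReflTransGen r' (f a) (f b)) {a b : α} :
    Relation.ReflTransGen r a b → Relation.ReflTransGen r' (f a) (f b) := by
  intro hab
  induction hab with
  | refl => exact Relation.ReflTransGen.refl
  | tail _ h2 ih => exact ih.trans (h _ _ h2)

lemma ERel_mono {E : Fin k → Fin N × Fin N} {S S' : Finset (Fin k)} (hs : S ⊆ S') {x y} :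
    ERel E S x y → ERel E S' x y := by
  rintro ⟨t, ht, h⟩
  exact ⟨t, hs ht, h⟩

lemma CW_mono {E : Fin k → Fin N × Fin N} {W : Finset (Fin N)} {S S' : Finset (Fin k)}
    (hs : S ⊆ S') (h : CW E W S) : CW E W S' := by
  intro v hv w hw
  exact rtg_lift (fun a b hab => Relation.ReflTransGen.single (ERel_mono hs hab)) (h v hv w hw)

/-- Path decomposition when passing through `insert t S`. -/
lemma path_decomp {E : Fin k → Fin N × Fin N} {S : Finset (Fin k)} {t : Fin k}
    {a b : Fin N} (hEt : E t = (a, b)) {u w : Fin N}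
    (h : Relation.ReflTransGen (ERel E (insert t S)) u w) :
    Relation.ReflTransGen (ERel E S) u w ∨
      ((Relation.ReflTransGen (ERel E S) u a ∨ Relation.ReflTransGen (ERel E S) u b) ∧
       (Relation.ReflTransGen (ERel E S) a w ∨ Relation.ReflTransGen (ERel E S) b w)) := by
  induction h with
  | refl => exact Or.inl Relation.ReflTransGen.refl
  | tail _ h2 ih =>
    rename_i x y _
    obtain ⟨t', ht', hE⟩ := h2
    rcases Finset.mem_insert.mp ht' with rfl | htS
    · rw [hEt] at hE
      have hxy : (x = a ∧ y = b) ∨ (x = b ∧ y = a) := by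
        rcases hE with h | h
        · rw [Prod.mk.injEq] at h; exact Or.inl ⟨h.1.symm, h.2.symm⟩
        · rw [Prod.mk.injEq] at h; exact Or.inr ⟨h.2.symm, h.1.symm⟩
      rcases ih with hux | ⟨hu, _⟩
      · rcases hxy with ⟨rfl, rfl⟩ | ⟨rfl, rfl⟩
        · exact Or.inr ⟨Or.inl hux, Or.inr Relation.ReflTransGen.refl⟩
        · exact Or.inr ⟨Or.inr hux, Or.inl Relation.ReflTransGen.refl⟩
      · rcases hxy with ⟨rfl, rfl⟩ | ⟨rfl, rfl⟩
        · exact Or.inr ⟨hu, Or.inr Relation.ReflTransGen.refl⟩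
        · exact Or.inr ⟨hu, Or.inl Relation.ReflTransGen.refl⟩
    · have hstep : ERel E S x y := ⟨t', htS, hE⟩
      rcases ih with hux | ⟨hu, ha⟩
      · exact Or.inl (hux.tail hstep)
      · rcases ha with ha | ha
        · exact Or.inr ⟨hu, Or.inl (ha.tail hstep)⟩
        · exact Or.inr ⟨hu, Or.inr (ha.tail hstep)⟩
end Conn

section Bound
variable {k N : ℕ} (E : Fin k → Fin N × Fin N)

open Classical in
noncomputable def Mins (S : Finset (Fin k)) : Finset (Fin N) :=
  Finset.univ.filter (fun v => ∀ w, Relation.ReflTransGen (ERel E S) v w → v ≤ w)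

lemma mem_Mins {S : Finset (Fin k)} {v : Fin N} :
    v ∈ Mins E S ↔ ∀ w, Relation.ReflTransGen (ERel E S) v w → v ≤ w := by
  classical
  simp [Mins]

lemma exists_min (S : Finset (Fin k)) (v : Fin N) :
    ∃ m ∈ Mins E S, Relation.ReflTransGen (ERel E S) v m := by
  classical
  set C := Finset.univ.filter (fun w => Relation.ReflTransGen (ERel E S) v w) with hCdef
  have hv : v ∈ C := by
    simp only [hCdef, Finset.mem_filter, Finset.mem_univ, true_and]
    exact Relation.ReflTransGen.refl
  have hC : C.Nonempty := ⟨v, hv⟩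
  have hmC : Relation.ReflTransGen (ERel E S) v (C.min' hC) := by
    have h := C.min'_mem hC
    simp only [hCdef, Finset.mem_filter] at h
    exact h.2
  refine ⟨C.min' hC, ?_, hmC⟩
  rw [mem_Mins]
  intro w hw
  have hwC : w ∈ C := by
    rw [hCdef]
    simpa using hmC.trans hw
  exact C.min'_le w hwC

lemma Mins_eq_of_reach {S : Finset (Fin k)} {v w : Fin N} (hv : v ∈ Mins E S)
    (hw : w ∈ Mins E S) (h : Relation.ReflTransGen (ERel E S) v w) : v = w :=
  le_antisymm (mem_Mins E |>.mp hv _ h) (mem_Mins E |>.mp hw _ (rtg_symm ERel_symm h))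

lemma Mins_insert_card (S : Finset (Fin k)) (t : Fin k) :
    (Mins E S).card ≤ (Mins E (insert t S)).card + 1 := by
  classical
  by_cases hD : (Mins E S \ Mins E (insert t S)).Nonempty
  · set D := Mins E S \ Mins E (insert t S) with hDdef
    set d₀ := D.min' hD with hd₀def
    suffices hsub : Mins E S ⊆ insert d₀ (Mins E (insert t S)) by
      calc (Mins E S).card ≤ (insert d₀ (Mins E (insert t S))).card := Finset.card_le_card hsub
        _ ≤ (Mins E (insert t S)).card + 1 := Finset.card_insert_le _ _
    set a := (E t).1
    set b := (E t).2
    have hEt : E t = (a, b) := rfl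
    have demote : ∀ u ∈ D,
        (Relation.ReflTransGen (ERel E S) u a ∨ Relation.ReflTransGen (ERel E S) u b) ∧
        ∃ w, w < u ∧
          (Relation.ReflTransGen (ERel E S) a w ∨ Relation.ReflTransGen (ERel E S) b w) := by
      intro u hu
      rw [hDdef, Finset.mem_sdiff] at hu
      obtain ⟨huS, huI⟩ := hu
      rw [mem_Mins] at huI
      push_neg at huI
      obtain ⟨w, hw1, hw2⟩ := huI
      rcases path_decomp hEt hw1 with hcase | ⟨htouch, hfrom⟩
      · exact absurd ((mem_Mins E).mp huS _ hcase) (not_le_of_gt hw2)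
      · exact ⟨htouch, w, hw2, hfrom⟩
    have uniq : ∀ u₁ ∈ Mins E S, ∀ u₂ ∈ Mins E S, ∀ c,
        Relation.ReflTransGen (ERel E S) u₁ c → Relation.ReflTransGen (ERel E S) u₂ c →
        u₁ = u₂ := by
      intro u₁ h₁ u₂ h₂ c hc₁ hc₂
      exact Mins_eq_of_reach E h₁ h₂ (hc₁.trans (rtg_symm ERel_symm hc₂))
    intro v hv
    by_cases hvm : v ∈ Mins E (insert t S)
    · exact Finset.mem_insert_of_mem hvm
    have hvD : v ∈ D := by rw [hDdef, Finset.mem_sdiff]; exact ⟨hv, hvm⟩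
    rw [Finset.mem_insert]
    left
    by_contra hne
    have hd₀D : d₀ ∈ D := D.min'_mem hD
    have hd₀S : d₀ ∈ Mins E S := (Finset.mem_sdiff.mp (hDdef ▸ hd₀D)).1
    have hlt : d₀ < v := lt_of_le_of_ne (D.min'_le v hvD) (Ne.symm hne)
    obtain ⟨hd₀touch, w, hwlt, hwfrom⟩ := demote d₀ hd₀D
    obtain ⟨hvtouch, -⟩ := demote v hvD
    obtain ⟨m, hmS, hwm⟩ := exists_min E S w
    have hmw : Relation.ReflTransGen (ERel E S) m w := rtg_symm ERel_symm hwm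
    have hmle : m ≤ w := (mem_Mins E).mp hmS _ hmw
    have hmltd : m < d₀ := lt_of_le_of_lt hmle hwlt
    have hmtouch : Relation.ReflTransGen (ERel E S) m a ∨
        Relation.ReflTransGen (ERel E S) m b := by
      rcases hwfrom with h | h
      · exact Or.inl (hmw.trans (rtg_symm ERel_symm h))
      · exact Or.inr (hmw.trans (rtg_symm ERel_symm h))
    have hvS : v ∈ Mins E S := hv
    rcases hmtouch with hm | hm <;> rcases hd₀touch with hd | hd <;> rcases hvtouch with hv' | hv'
    · exact absurd (uniq m hmS d₀ hd₀S a hm hd) (ne_of_lt hmltd)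
    · exact absurd (uniq m hmS d₀ hd₀S a hm hd) (ne_of_lt hmltd)
    · exact absurd (uniq m hmS v hvS a hm hv') (ne_of_lt (lt_trans hmltd hlt))
    · exact absurd (uniq v hvS d₀ hd₀S b hv' hd) hne
    · exact absurd (uniq v hvS d₀ hd₀S a hv' hd) hne
    · exact absurd (uniq m hmS v hvS b hm hv') (ne_of_lt (lt_trans hmltd hlt))
    · exact absurd (uniq m hmS d₀ hd₀S b hm hd) (ne_of_lt hmltd)
    · exact absurd (uniq m hmS d₀ hd₀S b hm hd) (ne_of_lt hmltd)
  · rw [Finset.not_nonempty_iff_eq_empty, Finset.sdiff_eq_empty_iff_subset] at hD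
    exact le_trans (Finset.card_le_card hD) (Nat.le_succ _)

lemma bound_aux : ∀ S : Finset (Fin k), N ≤ (Mins E S).card + S.card := by
  intro S
  induction S using Finset.induction_on with
  | empty =>
    have : Mins E ∅ = Finset.univ := by
      ext v
      simp only [Finset.mem_univ, iff_true, mem_Mins]
      intro w hw
      have : v = w := by
        induction hw with
        | refl => rfl
        | tail _ h2 ih =>
          obtain ⟨t, ht, -⟩ := h2
          exact absurd ht (Finset.notMem_empty _)
      exact le_of_eq this
    rw [this]
    simp
  | @insert t S htS ih =>
    have h1 := Mins_insert_card E S t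
    rw [Finset.card_insert_of_notMem htS]
    omega

lemma card_bound (S : Finset (Fin k))
    (hc : ∀ v w : Fin N, Relation.ReflTransGen (ERel E S) v w) (hN : 1 ≤ N) :
    N ≤ S.card + 1 := by
  have h1 : (Mins E S).card ≤ 1 := by
    rw [Finset.card_le_one]
    intro u hu v hv
    exact Mins_eq_of_reach E hu hv (hc u v)
  have := bound_aux E S
  omega

end Bound

section Contract
variable {k N : ℕ}

def cMap (a b v : Fin N) : Fin N := if v = b then a else v

def cE (a b : Fin N) (E : Fin (k+1) → Fin N × Fin N) : Fin k → Fin N × Fin N :=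
  fun e => (cMap a b (E e.castSucc).1, cMap a b (E e.castSucc).2)

@[simp] lemma cMap_b {a b : Fin N} : cMap a b b = a := by simp [cMap]
lemma cMap_a {a b : Fin N} : cMap a b a = a := by
  unfold cMap; split <;> rfl
lemma cMap_of_ne {a b v : Fin N} (h : v ≠ b) : cMap a b v = v := by simp [cMap, h]

variable {E : Fin (k+1) → Fin N × Fin N} {W : Finset (Fin N)} {a b : Fin N}

lemma cMap_reach (hEp : E (Fin.last k) = (a, b)) (X : Finset (Fin (k+1)))
    (hX : Fin.last k ∈ X) (u : Fin N) :
    Relation.ReflTransGen (ERel E X) u (cMap a b u) := by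
  rcases eq_or_ne u b with rfl | h
  · exact Relation.ReflTransGen.single ⟨Fin.last k, hX, Or.inr (by rw [hEp, cMap_b])⟩
  · rw [cMap_of_ne h]

lemma step_down (hEp : E (Fin.last k) = (a, b)) (S' : Finset (Fin k)) {x y : Fin N}
    (h : ERel E (insert (Fin.last k) (upF S')) x y) :
    Relation.ReflTransGen (ERel (cE a b E) S') (cMap a b x) (cMap a b y) := by
  obtain ⟨t, ht, hE⟩ := h
  rcases Finset.mem_insert.mp ht with rfl | ht'
  · rw [hEp] at hE
    have : cMap a b x = cMap a b y := by
      rcases hE with h | h <;> rw [Prod.mk.injEq] at h <;>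
        rw [← h.1, ← h.2, cMap_a, cMap_b]
    rw [this]
  · obtain ⟨t', ht'S, ht''⟩ := Finset.mem_map.mp ht'
    apply Relation.ReflTransGen.single
    refine ⟨t', ht'S, ?_⟩
    have hcast : E t'.castSucc = (x, y) ∨ E t'.castSucc = (y, x) := by
      have : E t'.castSucc = E t := by rw [← ht'']; rfl
      rwa [this]
    rcases hcast with h | h
    · left
      show (cMap a b (E t'.castSucc).1, cMap a b (E t'.castSucc).2) = _
      rw [h]
    · right
      show (cMap a b (E t'.castSucc).1, cMap a b (E t'.castSucc).2) = _
      rw [h]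

lemma step_up (hEp : E (Fin.last k) = (a, b)) (S' : Finset (Fin k)) {x y : Fin N}
    (h : ERel (cE a b E) S' x y) :
    Relation.ReflTransGen (ERel E (insert (Fin.last k) (upF S'))) x y := by
  obtain ⟨t', ht', hE⟩ := h
  set u := (E t'.castSucc).1 with hu
  set v := (E t'.castSucc).2 with hv
  have hPmem : Fin.last k ∈ insert (Fin.last k) (upF S') := Finset.mem_insert_self _ _
  have hstep : Relation.ReflTransGen (ERel E (insert (Fin.last k) (upF S'))) u v :=
    Relation.ReflTransGen.single
      ⟨t'.castSucc, Finset.mem_insert_of_mem (castSucc_mem_upF.mpr ht'), Or.inl rfl⟩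
  have hru := cMap_reach hEp _ hPmem u
  have hrv := cMap_reach hEp _ hPmem v
  have hsymm : ∀ {p q : Fin N}, Relation.ReflTransGen (ERel E (insert (Fin.last k) (upF S'))) p q →
      Relation.ReflTransGen (ERel E (insert (Fin.last k) (upF S'))) q p :=
    fun h => rtg_symm ERel_symm h
  rcases hE with h | h <;> rw [Prod.mk.injEq] at h
  · rw [← h.1, ← h.2]
    exact (hsymm hru).trans (hstep.trans hrv)
  · rw [← h.1, ← h.2]
    exact (hsymm hrv).trans ((hsymm hstep).trans hru)

lemma CT_mp (hEp : E (Fin.last k) = (a, b)) (S' : Finset (Fin k))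
    (h : CW E W (insert (Fin.last k) (upF S'))) : CW (cE a b E) (W.erase b) S' := by
  intro v hv w hw
  have hv' := Finset.mem_of_mem_erase hv
  have hw' := Finset.mem_of_mem_erase hw
  have := rtg_map (fun x y hxy => step_down hEp S' hxy) (h v hv' w hw')
  rwa [cMap_of_ne (Finset.ne_of_mem_erase hv), cMap_of_ne (Finset.ne_of_mem_erase hw)] at this

lemma CT_mpr (hEp : E (Fin.last k) = (a, b)) (hab : a ≠ b) (haW : a ∈ W)
    (S' : Finset (Fin k)) (h : CW (cE a b E) (W.erase b) S') :
    CW E W (insert (Fin.last k) (upF S')) := by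
  intro v hv w hw
  have hPmem : Fin.last k ∈ insert (Fin.last k) (upF S') := Finset.mem_insert_self _ _
  have hmem : ∀ u ∈ W, cMap a b u ∈ W.erase b := by
    intro u hu
    rcases eq_or_ne u b with rfl | h'
    · rw [cMap_b]; exact Finset.mem_erase.mpr ⟨hab, haW⟩
    · rw [cMap_of_ne h']; exact Finset.mem_erase.mpr ⟨h', hu⟩
  have hmid := rtg_lift (fun x y hxy => step_up hEp S' hxy)
    (h _ (hmem v hv) _ (hmem w hw))
  exact ((cMap_reach hEp _ hPmem v).trans hmid).trans
    (rtg_symm ERel_symm (cMap_reach hEp _ hPmem w))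

lemma insert_last_upF_univ :
    insert (Fin.last k) (upF (Finset.univ : Finset (Fin k))) = Finset.univ := by
  ext x
  simp only [Finset.mem_univ, iff_true, Finset.mem_insert]
  rcases eq_or_ne x (Fin.last k) with rfl | hx
  · exact Or.inl rfl
  · obtain ⟨y, rfl⟩ := Fin.exists_castSucc_eq.mpr hx
    exact Or.inr (castSucc_mem_upF.mpr (Finset.mem_univ y))

lemma CT_univ (hEp : E (Fin.last k) = (a, b)) (h : CW E W Finset.univ) :
    CW (cE a b E) (W.erase b) Finset.univ :=
  CT_mp hEp Finset.univ (by rwa [insert_last_upF_univ])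

lemma DelConn {T : Finset (Fin (k+1))} (hT : Fin.last k ∉ T) :
    CW E W T ↔ CW (fun e => E e.castSucc) W (downF T) := by
  have hrel : ∀ x y, ERel E T x y ↔ ERel (fun e => E e.castSucc) (downF T) x y := by
    intro x y
    constructor
    · rintro ⟨t, ht, h⟩
      have hne : t ≠ Fin.last k := fun he => hT (he ▸ ht)
      obtain ⟨t', rfl⟩ := Fin.exists_castSucc_eq.mpr hne
      exact ⟨t', mem_downF.mpr ht, h⟩
    · rintro ⟨t', ht', h⟩
      exact ⟨t'.castSucc, mem_downF.mp ht', h⟩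
  constructor <;> intro h v hv w hw
  · exact rtg_lift (fun x y hxy => Relation.ReflTransGen.single ((hrel x y).mp hxy)) (h v hv w hw)
  · exact rtg_lift (fun x y hxy => Relation.ReflTransGen.single ((hrel x y).mpr hxy)) (h v hv w hw)

lemma loop_erase (hloop : (E (Fin.last k)).1 = (E (Fin.last k)).2)
    {T : Finset (Fin (k+1))} (h : CW E W T) : CW E W (T.erase (Fin.last k)) := by
  intro v hv w hw
  refine rtg_lift (fun x y hxy => ?_) (h v hv w hw)
  obtain ⟨t, ht, hE⟩ := hxy
  rcases eq_or_ne t (Fin.last k) with rfl | hne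
  · have : x = y := by
      rcases hE with h' | h' <;> rw [Prod.ext_iff] at h' <;>
        · have := hloop
          rw [h'.1, h'.2] at this
          first
            | exact this
            | exact this.symm
    rw [this]
  · exact Relation.ReflTransGen.single ⟨t, Finset.mem_erase.mpr ⟨hne, ht⟩, hE⟩

lemma small_conn (hsmall : W.card ≤ 1) (S : Finset (Fin (k+1))) : CW E W S := by
  intro v hv w hw
  have : v = w := Finset.card_le_one.mp hsmall v hv w hw
  rw [this]

end Contract

theorem ML (k : ℕ) : ∀ (N : ℕ) (E : Fin k → Fin N × Fin N) (W : Finset (Fin N)),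
    (∀ e, (E e).1 ∈ W ∧ (E e).2 ∈ W) → W.Nonempty → CW E W Finset.univ →
    ∀ s : ℕ, W.card ≤ s →
    ∀ f : TPowC k, (∀ S, ¬(S.card = s ∧ CW E W S) → f S = 0) →
    (∀ T, CW E W T → dTPow k f T = 0) →
    ∃ g : TPowC k, (∀ S, ¬(S.card = s + 1 ∧ CW E W S) → g S = 0) ∧
      (∀ T, CW E W T → dTPow k g T = f T) := by
  induction k with
  | zero =>
    intro N E W hE hW hconn s hs f hsupp hcyc
    have hs1 : 1 ≤ s := le_trans hW.card_pos hs
    have hf0 : f = 0 := by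
      funext S
      apply hsupp
      rintro ⟨hc, -⟩
      have : S.card ≤ 0 := by
        have := Finset.card_le_univ S
        simpa using this
      omega
    refine ⟨0, fun S _ => rfl, fun T _ => ?_⟩
    rw [hf0]
    show dTPow 0 (0 : TPowC 0) T = (0 : TPowC 0) T
    rw [map_zero]
  | succ k IH =>
    intro N E W hE hW hconn s hs f hsupp hcyc
    classical
    by_cases hA : ∀ T, CW E W T → CW E W (T.erase (Fin.last k))
    · -- homotopy case
      refine ⟨hK f, ?_, ?_⟩
      · intro S hS
        by_cases hp : Fin.last k ∈ S
        · show (if Fin.last k ∈ S then (-1 : ℚ) ^ (downF S).card * f (upF (downF S)) else 0) = 0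
          rw [if_pos hp]
          by_cases hf : f (upF (downF S)) = 0
          · rw [hf, mul_zero]
          · exfalso
            apply hS
            have hgood : (upF (downF S)).card = s ∧ CW E W (upF (downF S)) := by
              by_contra hc
              exact hf (hsupp _ hc)
            constructor
            · have h1 : (upF (downF S)).card = (downF S).card := card_upF _
              have h2 := card_downF hp
              omega
            · have h2 := hgood.2
              rw [upF_downF] at h2
              exact CW_mono (Finset.erase_subset _ _) h2
        · show (if Fin.last k ∈ S then (-1 : ℚ) ^ (downF S).card * f (upF (downF S)) else 0) = 0
          rw [if_neg hp]
      · intro T hT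
        have hHI := HI f T
        have h2 : hK (dTPow (k+1) f) T = 0 := by
          show (if Fin.last k ∈ T then (-1 : ℚ) ^ (downF T).card
            * (dTPow (k+1) f) (upF (downF T)) else 0) = 0
          by_cases hp : Fin.last k ∈ T
          · rw [if_pos hp]
            have hconn2 : CW E W (upF (downF T)) := by
              rw [upF_downF]
              exact hA T hT
            rw [hcyc _ hconn2, mul_zero]
          · rw [if_neg hp]
        rw [h2, add_zero] at hHI
        exact hHI
    · -- contraction case
      push_neg at hA
      obtain ⟨T₀, hT₀c, hT₀e⟩ := hA
      have hab : (E (Fin.last k)).1 ≠ (E (Fin.last k)).2 :=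
        fun h => hT₀e (loop_erase h hT₀c)
      set a := (E (Fin.last k)).1 with ha
      set b := (E (Fin.last k)).2 with hb
      have hEp : E (Fin.last k) = (a, b) := by rw [ha, hb]
      have haW : a ∈ W := (hE (Fin.last k)).1
      have hbW : b ∈ W := (hE (Fin.last k)).2
      have hW2 : 2 ≤ W.card := by
        by_contra hc
        exact hT₀e (small_conn (by omega) _)
      have hs2 : 2 ≤ s := le_trans hW2 hs
      set E' := cE a b E with hE'def
      set W' := W.erase b with hW'def
      have haW' : a ∈ W' := Finset.mem_erase.mpr ⟨hab, haW⟩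
      have hcm : ∀ v, v ∈ W → cMap a b v ∈ W' := by
        intro v hv
        rcases eq_or_ne v b with rfl | h
        · rw [cMap_b]; exact haW'
        · rw [cMap_of_ne h]; exact Finset.mem_erase.mpr ⟨h, hv⟩
      have hE' : ∀ e, (E' e).1 ∈ W' ∧ (E' e).2 ∈ W' :=
        fun e => ⟨hcm _ (hE e.castSucc).1, hcm _ (hE e.castSucc).2⟩
      have hW'ne : W'.Nonempty := ⟨a, haW'⟩
      have hconn' : CW E' W' Finset.univ := CT_univ hEp hconn
      have hcard' : W'.card ≤ s - 1 := by
        rw [hW'def, Finset.card_erase_of_mem hbW]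
        omega
      set f' : TPowC k := fun S' => f (insert (Fin.last k) (upF S')) with hf'def
      have hff' : ∀ Y, Fin.last k ∈ Y → f Y = f' (downF Y) := by
        intro Y hY
        show f Y = f (insert (Fin.last k) (upF (downF Y)))
        rw [insert_upF_downF hY]
      have hsupp' : ∀ S', ¬(S'.card = s - 1 ∧ CW E' W' S') → f' S' = 0 := by
        intro S' hS'
        apply hsupp
        rintro ⟨hc, hcw⟩
        apply hS'
        have hcc : (insert (Fin.last k) (upF S')).card = S'.card + 1 := by
          rw [Finset.card_insert_of_notMem last_not_mem_upF, card_upF]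
        constructor
        · omega
        · exact CT_mp hEp S' hcw
      have hcyc' : ∀ T', CW E' W' T' → dTPow k f' T' = 0 := by
        intro T' hc'
        have hTc : CW E W (insert (Fin.last k) (upF T')) := CT_mpr hEp hab haW T' hc'
        have h0 := hcyc _ hTc
        rw [TL1 hff' (Finset.mem_insert_self _ _)] at h0
        rwa [downF_insert_last, downF_upF] at h0
      obtain ⟨g', hg's, hg'd⟩ := IH N E' W' hE' hW'ne hconn' (s-1) hcard' f' hsupp' hcyc'
      set g₁ : TPowC (k+1) := fun Y => if Fin.last k ∈ Y then g' (downF Y) else 0 with hg₁def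
      have hg₁ : ∀ Y, Fin.last k ∈ Y → g₁ Y = g' (downF Y) := fun Y hY => if_pos hY
      have hg₁supp : ∀ Y, ¬(Y.card = s + 1 ∧ CW E W Y) → g₁ Y = 0 := by
        intro Y hY
        by_cases hp : Fin.last k ∈ Y
        · rw [hg₁ _ hp]
          by_contra hne
          apply hY
          have hgood : (downF Y).card = (s - 1) + 1 ∧ CW E' W' (downF Y) := by
            by_contra hc
            exact hne (hg's _ hc)
          have hcd := card_downF hp
          constructor
          · omega
          · have := CT_mpr hEp hab haW _ hgood.2
            rwa [insert_upF_downF hp] at this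
        · exact if_neg hp
      have hdg₁ : ∀ S, Fin.last k ∈ S → CW E W S → dTPow (k+1) g₁ S = f S := by
        intro S hp hcw
        rw [TL1 hg₁ hp]
        have hconnd : CW E' W' (downF S) := by
          apply CT_mp hEp
          rwa [insert_upF_downF hp]
        rw [hg'd _ hconnd]
        show f (insert (Fin.last k) (upF (downF S))) = f S
        rw [insert_upF_downF hp]
      set r : TPowC (k+1) := fun T => if CW E W T then f T - dTPow (k+1) g₁ T else 0 with hrdef
      have hr_eq : ∀ T, CW E W T → r T = f T - dTPow (k+1) g₁ T := fun T h => if_pos h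
      have hr_conn : ∀ T, ¬ CW E W T → r T = 0 := fun T h => if_neg h
      have hr_p : ∀ T, Fin.last k ∈ T → r T = 0 := by
        intro T hp
        by_cases hcw : CW E W T
        · rw [hr_eq _ hcw, hdg₁ _ hp hcw, sub_self]
        · exact hr_conn _ hcw
      have hr_card : ∀ T, T.card ≠ s → r T = 0 := by
        intro T hc
        by_cases hcw : CW E W T
        · rw [hr_eq _ hcw]
          have hfT : f T = 0 := hsupp T (by tauto)
          have hdg : dTPow (k+1) g₁ T = 0 := by
            rw [dTPow_apply]
            apply Finset.sum_eq_zero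
            intro e he
            have heT : e ∉ T := by simpa using he
            have : g₁ (insert e T) = 0 := by
              apply hg₁supp
              rintro ⟨hc', -⟩
              rw [Finset.card_insert_of_notMem heT] at hc'
              omega
            rw [this, mul_zero]
          rw [hfT, hdg, sub_zero]
        · exact hr_conn _ hcw
      have hr_cyc : ∀ T, CW E W T → dTPow (k+1) r T = 0 := by
        intro T hcw
        rw [dTPow_apply]
        have hstep : ∀ e ∈ Tᶜ,
            (-1 : ℚ) ^ (T.filter (fun x => x < e)).card * r (insert e T)
              = (-1 : ℚ) ^ (T.filter (fun x => x < e)).card * f (insert e T)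
                - (-1 : ℚ) ^ (T.filter (fun x => x < e)).card
                  * dTPow (k+1) g₁ (insert e T) := by
          intro e he
          rw [hr_eq _ (CW_mono (Finset.subset_insert _ _) hcw)]
          ring
        rw [Finset.sum_congr rfl hstep, Finset.sum_sub_distrib, ← dTPow_apply, ← dTPow_apply,
          hcyc T hcw, dTPow_dTPow, sub_zero]
      by_cases hdel : CW (fun e => E e.castSucc) W Finset.univ
      · set r' : TPowC k := fun S' => r (upF S') with hr'def
        have hrr' : ∀ Y, Fin.last k ∉ Y → r Y = r' (downF Y) := by
          intro Y hY
          show r Y = r (upF (downF Y))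
          rw [upF_downF_of_not_mem hY]
        have hsupp'' : ∀ S', ¬(S'.card = s ∧ CW (fun e => E e.castSucc) W S') → r' S' = 0 := by
          intro S' hS'
          by_cases hc : S'.card = s
          · by_cases hcw : CW E W (upF S')
            · exfalso
              apply hS'
              refine ⟨hc, ?_⟩
              have := (DelConn last_not_mem_upF).mp hcw
              rwa [downF_upF] at this
            · exact hr_conn _ hcw
          · exact hr_card _ (by rwa [card_upF])
        have hcyc'' : ∀ T', CW (fun e => E e.castSucc) W T' → dTPow k r' T' = 0 := by
          intro T' hcw'
          have hcwup : CW E W (upF T') := by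
            rw [DelConn last_not_mem_upF, downF_upF]
            exact hcw'
          have h2 := TL2 hrr' (last_not_mem_upF (S := T'))
          rw [hr_cyc _ hcwup, downF_upF,
            hr_p _ (Finset.mem_insert_self _ _), mul_zero, add_zero] at h2
          exact h2.symm
        obtain ⟨gt, hgts, hgtd⟩ := IH N (fun e => E e.castSucc) W
          (fun e => hE e.castSucc) hW hdel s hs r' hsupp'' hcyc''
        set g₀ : TPowC (k+1) := fun Y => if Fin.last k ∈ Y then 0 else gt (downF Y) with hg₀def
        have hg₀supp : ∀ Y, ¬(Y.card = s + 1 ∧ CW E W Y) → g₀ Y = 0 := by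
          intro Y hY
          by_cases hp : Fin.last k ∈ Y
          · exact if_pos hp
          · show (if Fin.last k ∈ Y then 0 else gt (downF Y)) = 0
            rw [if_neg hp]
            apply hgts
            rintro ⟨hc, hcw⟩
            apply hY
            constructor
            · rwa [card_downF_of_not_mem hp] at hc
            · rw [DelConn hp]
              exact hcw
        have hdg₀ : ∀ T, CW E W T → dTPow (k+1) g₀ T = r T := by
          intro T hcw
          by_cases hp : Fin.last k ∈ T
          · rw [hr_p _ hp]
            rw [TL1 (x := g₀) (x' := fun _ => (0 : ℚ)) (fun Y hY => if_pos hY) hp]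
            show dTPow k (0 : TPowC k) (downF T) = 0
            rw [map_zero]
            rfl
          · have h2 := TL2 (x := g₀) (x' := gt) (fun Y hY => if_neg hY) hp
            rw [h2]
            have : g₀ (insert (Fin.last k) T) = 0 := if_pos (Finset.mem_insert_self _ _)
            rw [this, mul_zero, add_zero]
            rw [hgtd _ ((DelConn hp).mp hcw)]
            show r (upF (downF T)) = r T
            rw [upF_downF_of_not_mem hp]
        refine ⟨fun S => g₁ S + g₀ S, ?_, ?_⟩
        · intro S hS
          show g₁ S + g₀ S = 0
          rw [hg₁supp S hS, hg₀supp S hS, add_zero]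
        · intro T hcw
          have hadd : dTPow (k+1) (fun S => g₁ S + g₀ S) T
              = dTPow (k+1) g₁ T + dTPow (k+1) g₀ T := by
            have h3 : (fun S => g₁ S + g₀ S) = g₁ + g₀ := rfl
            rw [h3, map_add]
            rfl
          rw [hadd, hdg₀ T hcw]
          have := hr_eq T hcw
          rw [this]
          ring
      · have hr0 : ∀ T, r T = 0 := by
          intro T
          by_cases hcw : CW E W T
          · by_cases hp : Fin.last k ∈ T
            · exact hr_p _ hp
            · exfalso
              apply hdel
              exact CW_mono (Finset.subset_univ _) ((DelConn hp).mp hcw)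
          · exact hr_conn _ hcw
        refine ⟨g₁, hg₁supp, ?_⟩
        intro T hcw
        have h1 := hr_eq T hcw
        rw [hr0 T] at h1
        have := h1.symm
        linarith [this]

section Glue
variable {k N : ℕ} (E : Fin k → Fin N × Fin N)

lemma SolidConn_iff_CW (S : Finset (Fin k)) :
    SolidConn E S ↔ CW E Finset.univ S := by
  constructor
  · intro h v _ w _
    exact h v w
  · intro h v w
    exact h v (Finset.mem_univ v) w (Finset.mem_univ w)

lemma SolidConn_eq_ERel (S : Finset (Fin k)) :
    (fun a b => ∃ t ∈ S, E t = (a, b) ∨ E t = (b, a)) = ERel E S := rfl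

lemma mem_Idisc_iff (f : TPowC k) :
    f ∈ Idisc E ↔ ∀ S, SolidConn E S → f S = 0 := by
  classical
  constructor
  · intro hf
    let K : Submodule ℚ (TPowC k) :=
      { carrier := {x : TPowC k | ∀ S, SolidConn E S → x S = 0}
        add_mem' := by
          intro x y hx hy S hS
          show x S + y S = 0
          rw [hx S hS, hy S hS, add_zero]
        zero_mem' := fun S _ => rfl
        smul_mem' := by
          intro c x hx S hS
          show c * x S = 0
          rw [hx S hS, mul_zero] }
    have hle : Idisc E ≤ K := by
      rw [Idisc, Submodule.span_le]
      rintro x ⟨S, hS, rfl⟩ T hT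
      have hne : T ≠ S := fun h => hS (h ▸ hT)
      exact Pi.single_eq_of_ne (M := fun _ : Finset (Fin k) => ℚ) hne 1
    exact hle hf
  · intro hf
    have hrep : f = ∑ S : Finset (Fin k), f S • (Pi.single S (1 : ℚ) : TPowC k) := by
      funext T
      rw [Finset.sum_apply T Finset.univ (fun S => f S • (Pi.single S (1 : ℚ) : TPowC k))]
      rw [Finset.sum_eq_single T]
      · rw [Pi.smul_apply, Pi.single_eq_same, smul_eq_mul, mul_one]
      · intro S _ hne
        rw [Pi.smul_apply, Pi.single_eq_of_ne (Ne.symm hne), smul_zero]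
      · intro h
        exact absurd (Finset.mem_univ T) h
    rw [hrep]
    apply Submodule.sum_mem
    intro S _
    by_cases hS : SolidConn E S
    · rw [hf S hS, zero_smul]
      exact Submodule.zero_mem _
    · exact Submodule.smul_mem _ _ (Submodule.subset_span ⟨S, hS, rfl⟩)

end Glue


/-- let `Γ` be a connected graph with `N ≥ 1` vertices and `k` edges, and
let `C_Γ = C^{⊗k}/I_disc` with its induced differential `D`. Then the cohomology of
`C_Γ` is concentrated in the top degree `1 - N`: in every degree `-s` with `s ≠ N - 1`,
each closed element of `C_Γ` represented by an element supported in cardinality `s` is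
the differential of a class represented in cardinality `s + 1`. -/
theorem stmt_11 (k N : ℕ) (hN : 1 ≤ N) (E : Fin k → Fin N × Fin N)
    (hconn : SolidConn E Finset.univ)
    (D : (TPowC k ⧸ Idisc E) →ₗ[ℚ] (TPowC k ⧸ Idisc E))
    (hD : D.comp (Idisc E).mkQ = (Idisc E).mkQ.comp (dTPow k)) :
    ∀ s : ℕ, s ≠ N - 1 →
      ∀ f : TPowC k, (∀ S : Finset (Fin k), S.card ≠ s → f S = 0) →
        D ((Idisc E).mkQ f) = 0 →
        ∃ g : TPowC k, (∀ S : Finset (Fin k), S.card ≠ s + 1 → g S = 0) ∧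
          D ((Idisc E).mkQ g) = (Idisc E).mkQ f := by
  classical
  intro s hs f hsupp hclosed
  have hDmk : ∀ x : TPowC k, D ((Idisc E).mkQ x) = (Idisc E).mkQ (dTPow k x) := by
    intro x
    have := LinearMap.congr_fun hD x
    simpa using this
  have hdf : ∀ T, SolidConn E T → dTPow k f T = 0 := by
    have h1 : (Idisc E).mkQ (dTPow k f) = 0 := by rw [← hDmk]; exact hclosed
    have h2 : dTPow k f ∈ Idisc E := by
      rwa [Submodule.mkQ_apply, Submodule.Quotient.mk_eq_zero] at h1
    exact (mem_Idisc_iff E _).mp h2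
  set fc : TPowC k := fun S => if SolidConn E S then f S else 0 with hfcdef
  have hsub : f - fc ∈ Idisc E := by
    rw [mem_Idisc_iff]
    intro S hS
    show f S - fc S = 0
    show f S - (if SolidConn E S then f S else 0) = 0
    rw [if_pos hS, sub_self]
  have hmk : (Idisc E).mkQ fc = (Idisc E).mkQ f := by
    rw [Submodule.mkQ_apply, Submodule.mkQ_apply, Submodule.Quotient.eq]
    exact (neg_sub f fc) ▸ Submodule.neg_mem _ hsub
  rcases lt_or_ge s (N - 1) with hlt | hge
  · -- low degree: fc = 0
    have hfc0 : fc = 0 := by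
      funext S
      show (if SolidConn E S then f S else 0) = 0
      by_cases hS : SolidConn E S
      · rw [if_pos hS]
        by_cases hcard : S.card = s
        · exfalso
          have hb := card_bound E S (by rw [← SolidConn_eq_ERel]; exact hS) hN
          omega
        · exact hsupp S hcard
      · rw [if_neg hS]
    refine ⟨0, fun S _ => rfl, ?_⟩
    have : (Idisc E).mkQ f = 0 := by
      rw [← hmk, hfc0, map_zero]
    rw [this, map_zero, map_zero]
  · have hsN : N ≤ s := by omega
    have huniv : (Finset.univ : Finset (Fin N)).Nonempty := by
      have : (0 : ℕ) < N := hN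
      exact ⟨⟨0, this⟩, Finset.mem_univ _⟩
    have hcardu : (Finset.univ : Finset (Fin N)).card ≤ s := by
      rw [Finset.card_univ, Fintype.card_fin]
      exact hsN
    have hconnCW : CW E Finset.univ Finset.univ := (SolidConn_iff_CW E _).mp hconn
    have hsuppc : ∀ S, ¬(S.card = s ∧ CW E Finset.univ S) → fc S = 0 := by
      intro S hS
      show (if SolidConn E S then f S else 0) = 0
      by_cases hc : SolidConn E S
      · rw [if_pos hc]
        apply hsupp
        intro hcard
        exact hS ⟨hcard, (SolidConn_iff_CW E S).mp hc⟩
      · rw [if_neg hc]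
    have hcycc : ∀ T, CW E Finset.univ T → dTPow k fc T = 0 := by
      intro T hT
      rw [dTPow_apply]
      have hcong : ∀ e ∈ Tᶜ,
          (-1 : ℚ) ^ (T.filter (fun x => x < e)).card * fc (insert e T)
            = (-1 : ℚ) ^ (T.filter (fun x => x < e)).card * f (insert e T) := by
        intro e he
        have hins : SolidConn E (insert e T) := by
          rw [SolidConn_iff_CW]
          exact CW_mono (Finset.subset_insert _ _) hT
        show (-1 : ℚ) ^ _ * (if SolidConn E (insert e T) then f (insert e T) else 0) = _
        rw [if_pos hins]
      rw [Finset.sum_congr rfl hcong, ← dTPow_apply]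
      exact hdf T ((SolidConn_iff_CW E T).mpr hT)
    obtain ⟨g, hgs, hgd⟩ := ML k N E Finset.univ (fun e => ⟨Finset.mem_univ _, Finset.mem_univ _⟩)
      huniv hconnCW s hcardu fc hsuppc hcycc
    refine ⟨g, fun S hS => hgs S (fun h => hS h.1), ?_⟩
    rw [hDmk, ← hmk]
    rw [Submodule.mkQ_apply, Submodule.mkQ_apply, Submodule.Quotient.eq]
    rw [mem_Idisc_iff]
    intro T hT
    show dTPow k g T - fc T = 0
    rw [hgd T ((SolidConn_iff_CW E T).mp hT), sub_self]
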